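/- (Generalized minimal work principle, Eq. (11c).) In the setting of Theorem 1 — β > 0, H : ℝ → Matrix n n ℂ a continuously differentiable family of Hermitian matrices, ρ : ℝ → Matrix n n ℂ a continuously differentiable family of positive definite density matrices, with ΔW = ∫₀^τ Re tr(ρ_t · H'_t) dt, ΔQ = ∫₀^τ Re tr(ρ'_t · H_t) dt, Δ_iS = S(ρ_τ) − S(ρ_0) − β·ΔQ, ΔI = S(ρ_τ‖ρ^β_τ) − S(ρ_0‖ρ^β_0), ΔF^β = F^β_τ − F^β_0 — if the entropy production is nonnegative, Δ_iS ≥ 0, then ΔW ≥ ΔF^β + (1/β)·ΔI. -/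

import Mathlib

open scoped ComplexOrder

attribute [local instance] Matrix.normedAddCommGroup Matrix.normedSpace

/-- The matrix exponential of an `n × n` complex matrix. -/
noncomputable def matExp {n : ℕ} (A : Matrix (Fin n) (Fin n) ℂ) : Matrix (Fin n) (Fin n) ℂ :=
  NormedSpace.exp A

/-- The matrix logarithm, given by the continuous functional calculus (the real
logarithm applied to the eigenvalues of a Hermitian matrix). -/
noncomputable def matLog {n : ℕ} (A : Matrix (Fin n) (Fin n) ℂ) : Matrix (Fin n) (Fin n) ℂ :=
  cfc Real.log A

/-- The von Neumann entropy `S(ρ) = −Re tr(ρ log ρ)`. -/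
noncomputable def vnEntropy {n : ℕ} (ρ : Matrix (Fin n) (Fin n) ℂ) : ℝ :=
  -(Matrix.trace (ρ * matLog ρ)).re

/-- The relative entropy `S(ρ‖σ) = Re tr(ρ log ρ) − Re tr(ρ log σ)`. -/
noncomputable def relEntropy {n : ℕ} (ρ σ : Matrix (Fin n) (Fin n) ℂ) : ℝ :=
  (Matrix.trace (ρ * matLog ρ)).re - (Matrix.trace (ρ * matLog σ)).re

/-- The partition function `Z = Re tr(exp(−βH))`. -/
noncomputable def partZ {n : ℕ} (β : ℝ) (H : Matrix (Fin n) (Fin n) ℂ) : ℝ :=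
  (Matrix.trace (matExp ((-β) • H))).re

/-- The Gibbs state `ρ^β = exp(−βH)/Z`. -/
noncomputable def gibbs {n : ℕ} (β : ℝ) (H : Matrix (Fin n) (Fin n) ℂ) :
    Matrix (Fin n) (Fin n) ℂ :=
  (partZ β H)⁻¹ • matExp ((-β) • H)

/-! ### Auxiliary lemmas -/

lemma herm_smul {n : ℕ} {H : Matrix (Fin n) (Fin n) ℂ} (hH : H.IsHermitian) (r : ℝ) :
    (r • H).IsHermitian := by
  rw [Matrix.IsHermitian, Matrix.conjTranspose_smul, star_trivial, hH.eq]

lemma trace_cfc' {n : ℕ} {A : Matrix (Fin n) (Fin n) ℂ} (hA : A.IsHermitian) (f : ℝ → ℝ) :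
    Matrix.trace (cfc f A) = ((∑ i, f (hA.eigenvalues i) : ℝ) : ℂ) := by
  rw [hA.cfc_eq, Matrix.IsHermitian.cfc, Unitary.conjStarAlgAut_apply, Matrix.trace_mul_comm, ← mul_assoc,
    (Matrix.IsHermitian.eigenvectorUnitary hA).2.1, one_mul, Matrix.trace_diagonal]
  push_cast; rfl

lemma matExp_eq_cfc {n : ℕ} {A : Matrix (Fin n) (Fin n) ℂ} (hA : A.IsHermitian) :
    matExp A = cfc Real.exp A := by
  letI : NormedRing (Matrix (Fin n) (Fin n) ℂ) := Matrix.linftyOpNormedRing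
  letI : NormedAlgebra ℝ (Matrix (Fin n) (Fin n) ℂ) := Matrix.linftyOpNormedAlgebra
  letI : NormedAlgebra ℂ (Matrix (Fin n) (Fin n) ℂ) := Matrix.linftyOpNormedAlgebra
  rw [matExp, Real.exp_eq_exp_ℝ]
  exact (@CFC.exp_eq_normedSpace_exp ℝ (Matrix (Fin n) (Fin n) ℂ) _ IsSelfAdjoint _ _ _ Matrix.IsHermitian.instContinuousFunctionalCalculus A hA).symm

lemma partZ_eq {n : ℕ} (β : ℝ) {H : Matrix (Fin n) (Fin n) ℂ} (hH : H.IsHermitian) :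
    partZ β H = ∑ i, Real.exp ((herm_smul hH (-β)).eigenvalues i) := by
  rw [partZ, matExp_eq_cfc (herm_smul hH (-β)), trace_cfc' (herm_smul hH (-β))]
  simp [Complex.exp_ofReal_re]

lemma partZ_pos {n : ℕ} (hn : 0 < n) (β : ℝ) {H : Matrix (Fin n) (Fin n) ℂ}
    (hH : H.IsHermitian) : 0 < partZ β H := by
  rw [partZ_eq β hH]
  have : Nonempty (Fin n) := ⟨⟨0, hn⟩⟩
  exact Finset.sum_pos (fun i _ => Real.exp_pos _) Finset.univ_nonempty

lemma matLog_gibbs {n : ℕ} (hn : 0 < n) {β : ℝ} {H : Matrix (Fin n) (Fin n) ℂ}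
    (hH : H.IsHermitian) :
    matLog (gibbs β H) =
      algebraMap ℝ (Matrix (Fin n) (Fin n) ℂ) (-Real.log (partZ β H)) + (-β) • H := by
  have hA : ((-β) • H).IsHermitian := herm_smul hH (-β)
  have hZ : 0 < partZ β H := partZ_pos hn β hH
  set Z := partZ β H with hZdef
  have hgibbs : gibbs β H = cfc (fun x : ℝ => Z⁻¹ * Real.exp x) ((-β) • H) := by
    rw [gibbs, matExp_eq_cfc hA,
      ← cfc_const_mul (Z⁻¹) Real.exp ((-β) • H) (Real.continuous_exp.continuousOn)]
  have him : ContinuousOn Real.log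
      ((fun x : ℝ => Z⁻¹ * Real.exp x) '' spectrum ℝ ((-β) • H)) := by
    apply Real.continuousOn_log.mono
    rintro y ⟨x, -, rfl⟩
    exact (mul_pos (inv_pos.mpr hZ) (Real.exp_pos x)).ne'
  have key := cfc_comp' Real.log (fun x : ℝ => Z⁻¹ * Real.exp x) ((-β) • H) him
      ((continuous_const.mul Real.continuous_exp).continuousOn) hA
  rw [matLog, hgibbs, ← key]
  have hfun : (fun x : ℝ => Real.log ((fun x : ℝ => Z⁻¹ * Real.exp x) x))
      = fun x : ℝ => (-Real.log Z) + x := by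
    funext x
    simp [Function.comp, Real.log_mul (inv_ne_zero hZ.ne') (Real.exp_pos x).ne',
      Real.log_inv, Real.log_exp]
  rw [hfun]
  have key2 := cfc_const_add (p := Matrix.IsHermitian) (-Real.log Z) (fun x : ℝ => x) ((-β) • H)
    continuous_id.continuousOn hA
  have key3 := cfc_id' (p := Matrix.IsHermitian) ℝ ((-β) • H) hA
  rw [key3] at key2
  exact key2

lemma re_trace_log_gibbs {n : ℕ} (hn : 0 < n) (β : ℝ) {Hm ρm : Matrix (Fin n) (Fin n) ℂ}
    (hH : Hm.IsHermitian) (htr : Matrix.trace ρm = 1) :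
    (Matrix.trace (ρm * matLog (gibbs β Hm))).re
      = -Real.log (partZ β Hm) - β * (Matrix.trace (ρm * Hm)).re := by
  rw [matLog_gibbs hn hH, mul_add, Matrix.trace_add, Algebra.algebraMap_eq_smul_one,
    mul_smul_comm, mul_one, mul_smul_comm, Matrix.trace_smul, Matrix.trace_smul, htr]
  simp [Complex.real_smul]
  ring

lemma relEntropy_gibbs {n : ℕ} (hn : 0 < n) (β : ℝ) {Hm ρm : Matrix (Fin n) (Fin n) ℂ}
    (hH : Hm.IsHermitian) (htr : Matrix.trace ρm = 1) :
    relEntropy ρm (gibbs β Hm)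
      = -vnEntropy ρm + Real.log (partZ β Hm) + β * (Matrix.trace (ρm * Hm)).re := by
  rw [relEntropy, vnEntropy, re_trace_log_gibbs hn β hH htr]
  ring

noncomputable def entryCLM {n : ℕ} (i j : Fin n) : Matrix (Fin n) (Fin n) ℂ →L[ℝ] ℂ :=
  LinearMap.toContinuousLinearMap
    { toFun := fun A => A i j, map_add' := fun _ _ => rfl, map_smul' := fun _ _ => rfl }

lemma trace_mul_eq_sum {n : ℕ} (A B : Matrix (Fin n) (Fin n) ℂ) :
    Matrix.trace (A * B) = ∑ i, ∑ j, A i j * B j i := by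
  simp [Matrix.trace, Matrix.mul_apply, Matrix.diag]

lemma hasDerivAt_trace_mul {n : ℕ} (H ρ : ℝ → Matrix (Fin n) (Fin n) ℂ)
    (hH : ContDiff ℝ 1 H) (hρ : ContDiff ℝ 1 ρ) (t : ℝ) :
    HasDerivAt (fun s => (Matrix.trace (ρ s * H s)).re)
      ((Matrix.trace (deriv ρ t * H t)).re + (Matrix.trace (ρ t * deriv H t)).re) t := by
  have eρ : ∀ i j, HasDerivAt (fun s => ρ s i j) (deriv ρ t i j) t := fun i j =>
    (entryCLM i j).hasFDerivAt.comp_hasDerivAt t ((hρ.differentiable one_ne_zero) t).hasDerivAt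
  have eH : ∀ i j, HasDerivAt (fun s => H s i j) (deriv H t i j) t := fun i j =>
    (entryCLM i j).hasFDerivAt.comp_hasDerivAt t ((hH.differentiable one_ne_zero) t).hasDerivAt
  have h1 : HasDerivAt (fun s => ∑ i, ∑ j, ρ s i j * H s j i)
      (∑ i, ∑ j, (deriv ρ t i j * H t j i + ρ t i j * deriv H t j i)) t :=
    HasDerivAt.fun_sum fun i _ => HasDerivAt.fun_sum fun j _ => (eρ i j).mul (eH j i)
  have h2 : HasDerivAt (fun s => Matrix.trace (ρ s * H s))
      (Matrix.trace (deriv ρ t * H t) + Matrix.trace (ρ t * deriv H t)) t := by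
    simp_rw [trace_mul_eq_sum, ← Finset.sum_add_distrib]
    exact h1
  have h3 := Complex.reCLM.hasFDerivAt.comp_hasDerivAt t h2
  exact h3

lemma ftc_trace {n : ℕ} (H ρ : ℝ → Matrix (Fin n) (Fin n) ℂ)
    (hH : ContDiff ℝ 1 H) (hρ : ContDiff ℝ 1 ρ) (τ : ℝ) :
    (∫ t in (0:ℝ)..τ, (Matrix.trace (ρ t * deriv H t)).re)
      + (∫ t in (0:ℝ)..τ, (Matrix.trace (deriv ρ t * H t)).re)
      = (Matrix.trace (ρ τ * H τ)).re - (Matrix.trace (ρ 0 * H 0)).re := by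
  have cρ : Continuous ρ := hρ.continuous
  have cH : Continuous H := hH.continuous
  have cρ' : Continuous (deriv ρ) := hρ.continuous_deriv le_rfl
  have cH' : Continuous (deriv H) := hH.continuous_deriv le_rfl
  have centry : ∀ (f : ℝ → Matrix (Fin n) (Fin n) ℂ), Continuous f → ∀ i j,
      Continuous (fun t => f t i j) := fun f hf i j =>
    (continuous_apply j).comp ((continuous_apply i).comp hf)
  have c1 : Continuous fun t => (Matrix.trace (ρ t * deriv H t)).re := by
    simp_rw [trace_mul_eq_sum]
    exact Complex.continuous_re.comp <| continuous_finset_sum _ fun i _ =>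
      continuous_finset_sum _ fun j _ => (centry ρ cρ i j).mul (centry _ cH' j i)
  have c2 : Continuous fun t => (Matrix.trace (deriv ρ t * H t)).re := by
    simp_rw [trace_mul_eq_sum]
    exact Complex.continuous_re.comp <| continuous_finset_sum _ fun i _ =>
      continuous_finset_sum _ fun j _ => (centry _ cρ' i j).mul (centry H cH j i)
  have hint : IntervalIntegrable
      (fun t => (Matrix.trace (deriv ρ t * H t)).re + (Matrix.trace (ρ t * deriv H t)).re)
      MeasureTheory.volume 0 τ := (c2.add c1).intervalIntegrable _ _
  have h := intervalIntegral.integral_eq_sub_of_hasDerivAt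
    (f := fun s => (Matrix.trace (ρ s * H s)).re)
    (fun t _ => hasDerivAt_trace_mul H ρ hH hρ t) hint
  rw [intervalIntegral.integral_add (c2.intervalIntegrable _ _) (c1.intervalIntegrable _ _)] at h
  linarith [h]

/-- **Generalized minimal work principle (Eq. (11c)).**
In the setting of Theorem 1, if the entropy production is nonnegative
(`ΔiS ≥ 0`), then `ΔW ≥ ΔF^β + (1/β)·ΔI`. -/
theorem generalized_minimal_work_principle {n : ℕ} (hn : 0 < n)
    (β : ℝ) (hβ : 0 < β) (H ρ : ℝ → Matrix (Fin n) (Fin n) ℂ)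
    (hH : ContDiff ℝ 1 H) (hHherm : ∀ t, (H t).IsHermitian)
    (hρ : ContDiff ℝ 1 ρ)
    (hρpos : ∀ t, (ρ t).PosDef) (hρtr : ∀ t, Matrix.trace (ρ t) = 1)
    (τ : ℝ) (hτ : 0 ≤ τ)
    (ΔW ΔQ ΔiS ΔI ΔFβ : ℝ)
    (hW : ΔW = ∫ t in (0:ℝ)..τ, (Matrix.trace (ρ t * deriv H t)).re)
    (hQ : ΔQ = ∫ t in (0:ℝ)..τ, (Matrix.trace (deriv ρ t * H t)).re)
    (hiS : ΔiS = (vnEntropy (ρ τ) - vnEntropy (ρ 0)) - β * ΔQ)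
    (hI : ΔI = relEntropy (ρ τ) (gibbs β (H τ)) - relEntropy (ρ 0) (gibbs β (H 0)))
    (hF : ΔFβ = (-(1 / β) * Real.log (partZ β (H τ))) - (-(1 / β) * Real.log (partZ β (H 0))))
    (hpos : 0 ≤ ΔiS) :
    ΔW ≥ ΔFβ + (1 / β) * ΔI := by
  set Eτ := (Matrix.trace (ρ τ * H τ)).re with hEτ
  set E0 := (Matrix.trace (ρ 0 * H 0)).re with hE0
  set Sτ := vnEntropy (ρ τ) with hSτ
  set S0 := vnEntropy (ρ 0) with hS0
  set lτ := Real.log (partZ β (H τ)) with hlτ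
  set l0 := Real.log (partZ β (H 0)) with hl0
  have hWQ : ΔW + ΔQ = Eτ - E0 := by
    rw [hW, hQ]; exact ftc_trace H ρ hH hρ τ
  have hIeq : ΔI = (-Sτ + lτ + β * Eτ) - (-S0 + l0 + β * E0) := by
    rw [hI, relEntropy_gibbs hn β (hHherm τ) (hρtr τ), relEntropy_gibbs hn β (hHherm 0) (hρtr 0)]
  have hβ' : β ≠ 0 := hβ.ne'
  have hI' : (1 / β) * ΔI
      = -((1/β) * Sτ) + (1/β) * lτ + Eτ + (1/β) * S0 - (1/β) * l0 - E0 := by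
    rw [hIeq]; field_simp; try ring
  have hiS' : (1 / β) * ΔiS = (1/β) * Sτ - (1/β) * S0 - ΔQ := by
    rw [hiS]; field_simp; try ring
  have hpos' : 0 ≤ (1 / β) * ΔiS := mul_nonneg (by positivity) hpos
  rw [hF]
  linarith [hI', hiS', hpos', hWQ]
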